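/- Small cancellation property of the words V_i: let n ≥ 2, M = 24n, and V_i = h₁ h₂^{Mi+1} h₁ h₂^{Mi+2} ⋯ h₁ h₂^{M(i+1)} h₁. Suppose U is a common subword of V_i and V_j, say V_i = A U B and V_j = A' U B' as literal factorizations. Then either |U| < (4/M)·min{|V_i|, |V_j|}, or i = j and A = A' (hence the two occurrences coincide). -/

import Mathlib

/-- The two-letter alphabet {h₁, h₂}, encoded as `Fin 2`. -/
def h1 : Fin 2 := 0
def h2 : Fin 2 := 1

/-- The word `V_i = h₁ h₂^{Mi+1} h₁ h₂^{Mi+2} ⋯ h₁ h₂^{M(i+1)} h₁`. -/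
def Vword (M i : ℕ) : List (Fin 2) :=
  [h1] ++ (List.range M).flatMap (fun j => List.replicate (M * i + 1 + j) h2 ++ [h1])

namespace SC

def blockw (a : ℕ) : List (Fin 2) := List.replicate a h2 ++ [h1]

def W (l : List ℕ) : List (Fin 2) := h1 :: l.flatMap blockw

lemma fin2_eq_h2 (b : Fin 2) (hb : b ≠ h1) : b = h2 := by
  revert hb; revert b; decide

lemma W_nil : W [] = [h1] := rfl

lemma W_cons (a : ℕ) (l : List ℕ) :
    W (a :: l) = h1 :: (List.replicate a h2 ++ W l) := by
  simp [W, blockw]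

lemma Vword_eq (M i : ℕ) :
    Vword M i = W ((List.range M).map (fun j => M * i + 1 + j)) := by
  simp [Vword, W, blockw, List.flatMap_map]

lemma infix_split {α : Type*} {s t1 t2 : List α} (h : s <:+: t1 ++ t2) :
    s <:+: t1 ∨ s <:+: t2 ∨ ∃ s1 s2, s = s1 ++ s2 ∧ s1 <:+ t1 ∧ s2 <+: t2 := by
  obtain ⟨p, q, hpq⟩ := h
  rcases List.append_eq_append_iff.mp hpq with ⟨a', ha1, ha2⟩ | ⟨c', hc1, hc2⟩
  · -- t1 = (p ++ s) ++ a'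
    exact Or.inl ⟨p, a', by rw [ha1]⟩
  · -- p ++ s = t1 ++ c', t2 = c' ++ q
    rcases List.append_eq_append_iff.mp hc1 with ⟨a', ha1, ha2⟩ | ⟨c'', hc1', hc2'⟩
    · -- t1 = p ++ a', s = a' ++ c'
      exact Or.inr (Or.inr ⟨a', c', ha2, ⟨p, ha1.symm⟩, ⟨q, hc2.symm⟩⟩)
    · -- p = t1 ++ c'', c' = c'' ++ s
      exact Or.inr (Or.inl ⟨c'', q, by rw [hc2, hc2', List.append_assoc]⟩)

lemma h2run_le (L : ℕ) :
    ∀ l : List ℕ, (∀ a ∈ l, a ≤ L) → ∀ s : List (Fin 2),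
      s <:+: W l → (∀ x ∈ s, x = h2) → s.length ≤ L := by
  intro l
  induction l with
  | nil =>
    intro _ s hs hall
    cases s with
    | nil => simp
    | cons x s' =>
      have hx : x ∈ [h1] := hs.sublist.subset (by simp)
      have hx2 := hall x (by simp)
      simp at hx
      rw [hx] at hx2
      exact absurd hx2 (by decide)
  | cons a l' ih =>
    intro hmem s hs hall
    rw [W_cons] at hs
    have hs' : s <:+: (h1 :: List.replicate a h2) ++ W l' := by
      simpa using hs
    have ha : a ≤ L := hmem a (by simp)
    rcases infix_split hs' with h | h | ⟨s1, s2, rfl, h1s, h2s⟩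
    · have hlen := h.length_le
      simp at hlen
      rcases Nat.lt_or_ge s.length (a + 1) with hl | hl
      · omega
      · have hle : s.length = a + 1 := by omega
        have heq : s = h1 :: List.replicate a h2 :=
          h.sublist.eq_of_length (by simpa using hle)
        have := hall h1 (by rw [heq]; simp)
        exact absurd this (by decide)
    · exact ih (fun b hb => hmem b (by simp [hb])) s h hall
    · have hs2 : s2 = [] := by
        cases s2 with
        | nil => rfl
        | cons y s2' =>
          obtain ⟨t, ht⟩ := h2s
          have hy : y = h1 := by
            have := congrArg List.head? ht
            simpa [W] using this
          have := hall y (by simp)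
          rw [hy] at this
          exact absurd this (by decide)
      subst hs2
      have hlen := h1s.length_le
      simp at hlen
      rcases Nat.lt_or_ge s1.length (a + 1) with hl | hl
      · simp; omega
      · have hle : s1.length = a + 1 := by omega
        have heq : s1 = h1 :: List.replicate a h2 :=
          h1s.sublist.eq_of_length (by simpa using hle)
        have := hall h1 (by rw [heq]; simp)
        exact absurd this (by decide)

lemma rep_h1_inj : ∀ (a b : ℕ) (u v : List (Fin 2)),
    List.replicate a h2 ++ h1 :: u = List.replicate b h2 ++ h1 :: v → a = b ∧ u = v := by
  intro a
  induction a with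
  | zero =>
    intro b u v h
    cases b with
    | zero => simpa using h
    | succ b' =>
      rw [List.replicate_succ] at h
      simp at h
      exact absurd h.1 (by decide)
  | succ a' ih =>
    intro b u v h
    cases b with
    | zero =>
      rw [List.replicate_succ] at h
      simp at h
      exact absurd h.1 (by decide)
    | succ b' =>
      rw [List.replicate_succ, List.replicate_succ, List.cons_append, List.cons_append] at h
      injection h with _ h
      obtain ⟨ha, hb⟩ := ih b' u v h
      exact ⟨by omega, hb⟩

lemma strip_rep : ∀ (b : ℕ) (Z P Y : List (Fin 2)),
    List.replicate b h2 ++ Z = P ++ h1 :: Y →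
    ∃ P', P = List.replicate b h2 ++ P' ∧ Z = P' ++ h1 :: Y := by
  intro b
  induction b with
  | zero => intro Z P Y h; exact ⟨P, by simp, by simpa using h⟩
  | succ b' ih =>
    intro Z P Y h
    rw [List.replicate_succ, List.cons_append] at h
    cases P with
    | nil =>
      simp at h
      exact absurd h.1 (by decide)
    | cons p P₂ =>
      rw [List.cons_append] at h
      injection h with hp h
      obtain ⟨P', h1', h2'⟩ := ih Z P₂ Y h
      exact ⟨P', by rw [List.replicate_succ, List.cons_append, ← hp, h1'], h2'⟩

lemma gap_decomp : ∀ (l : List ℕ) (P Q : List (Fin 2)) (a : ℕ),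
    W l = P ++ [h1] ++ List.replicate a h2 ++ [h1] ++ Q →
    ∃ l1 l2, l = l1 ++ a :: l2 ∧ P ++ [h1] = W l1 := by
  intro l
  induction l with
  | nil =>
    intro P Q a h
    have := congrArg List.length h
    simp [W_nil] at this
    omega
  | cons a0 l' ih =>
    intro P Q a h
    rw [W_cons] at h
    cases P with
    | nil =>
      simp only [List.nil_append, List.singleton_append, List.append_assoc,
        List.cons_append, List.cons.injEq] at h
      -- h : h1 = h1 ∧ rep a0 ++ W l' = rep a ++ (h1 :: Q)  (roughly)
      have h2' : List.replicate a0 h2 ++ h1 :: (l'.flatMap blockw)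
          = List.replicate a h2 ++ h1 :: Q := by
        have := h.2
        simpa [W] using this
      obtain ⟨ha, hq⟩ := rep_h1_inj a0 a _ _ h2'
      exact ⟨[], l', by simp [ha], by simp [W_nil]⟩
    | cons p P₂ =>
      simp only [List.cons_append, List.append_assoc, List.singleton_append,
        List.cons.injEq] at h
      obtain ⟨hp, h⟩ := h
      -- h : rep a0 ++ W l' = P₂ ++ h1 :: (rep a ++ h1 :: Q)  (roughly)
      have h' : List.replicate a0 h2 ++ W l'
          = P₂ ++ h1 :: (List.replicate a h2 ++ h1 :: Q) := by
        simpa using h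
      obtain ⟨P₃, hP₂, hWl'⟩ := strip_rep a0 (W l') P₂ _ h'
      have hWl'' : W l' = P₃ ++ [h1] ++ List.replicate a h2 ++ [h1] ++ Q := by
        simpa [List.append_assoc] using hWl'
      obtain ⟨l1, l2, hl, hP⟩ := ih P₃ Q a hWl''
      refine ⟨a0 :: l1, l2, by simp [hl], ?_⟩
      rw [W_cons, ← hP, hP₂]
      simp [hp, List.append_assoc]

lemma Vword_gap {M i : ℕ} {P Q : List (Fin 2)} {a : ℕ}
    (h : Vword M i = P ++ [h1] ++ List.replicate a h2 ++ [h1] ++ Q) :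
    ∃ k, k < M ∧ a = M * i + 1 + k ∧
      P ++ [h1] = W ((List.range k).map (fun j => M * i + 1 + j)) := by
  rw [Vword_eq] at h
  obtain ⟨l1, l2, hl, hP⟩ := gap_decomp _ P Q a h
  have hlen := congrArg List.length hl
  simp at hlen
  have hkM : l1.length < M := by omega
  have hl1 : l1 = (List.range l1.length).map (fun j => M * i + 1 + j) := by
    have h1' : List.take l1.length ((List.range M).map (fun j => M * i + 1 + j)) = l1 := by
      rw [hl, List.take_left]
    rw [← List.map_take, List.take_range] at h1'
    have hmin : l1.length ⊓ M = l1.length := min_eq_left (le_of_lt hkM)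
    rw [hmin] at h1'
    exact h1'.symm
  have ha : a = M * i + 1 + l1.length := by
    have e1 : ((List.range M).map (fun j => M * i + 1 + j))[l1.length]?
        = some (M * i + 1 + l1.length) := by
      simp [hkM]
    rw [hl] at e1
    have e2 : (l1 ++ a :: l2)[l1.length]? = some a := by
      rw [List.getElem?_append_right (le_refl _)]
      simp
    rw [e2] at e1
    exact Option.some_injective _ e1
  exact ⟨l1.length, hkM, ha, by rw [hP]; exact congrArg W hl1⟩

lemma div_mod_unique {M i j k k' : ℕ} (hk : k < M) (hk' : k' < M)
    (h' : M * i + 1 + k = M * j + 1 + k') : i = j ∧ k = k' := by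
  have h : M * i + k = M * j + k' := by omega
  have key : i = j := by
    rcases Nat.lt_trichotomy i j with hlt | heq | hgt
    · exfalso
      have h2' : M * i + M ≤ M * j := by
        have := Nat.mul_le_mul_left M (Nat.succ_le_of_lt hlt)
        rw [Nat.mul_succ] at this
        exact this
      omega
    · exact heq
    · exfalso
      have h2' : M * j + M ≤ M * i := by
        have := Nat.mul_le_mul_left M (Nat.succ_le_of_lt hgt)
        rw [Nat.mul_succ] at this
        exact this
      omega
  refine ⟨key, ?_⟩
  subst key
  omega

lemma all_h2 (U : List (Fin 2)) (h : U.count h1 = 0) :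
    U = List.replicate U.length h2 := by
  rw [List.eq_replicate_length]
  intro b hb
  refine fin2_eq_h2 b ?_
  intro hb1
  rw [hb1] at hb
  exact absurd hb (List.count_eq_zero.mp h)

lemma first_h1 : ∀ (U : List (Fin 2)), h1 ∈ U →
    ∃ a D, U = List.replicate a h2 ++ [h1] ++ D := by
  intro U
  induction U with
  | nil => intro h; simp at h
  | cons x U' ih =>
    intro h
    by_cases hx : x = h1
    · exact ⟨0, U', by simp [hx]⟩
    · have hx2 := fin2_eq_h2 x hx
      have hmem : h1 ∈ U' := by
        rcases List.mem_cons.mp h with h | h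
        · exact absurd h.symm hx
        · exact h
      obtain ⟨a, D, hD⟩ := ih hmem
      exact ⟨a + 1, D, by rw [List.replicate_succ]; simp [hx2, hD]⟩

lemma two_h1 : ∀ (U : List (Fin 2)), 2 ≤ U.count h1 →
    ∃ c a D, U = List.replicate c h2 ++ [h1] ++ List.replicate a h2 ++ [h1] ++ D := by
  intro U
  induction U with
  | nil => intro h; simp at h
  | cons x U' ih =>
    intro h
    by_cases hx : x = h1
    · have hc : 1 ≤ U'.count h1 := by
        rw [hx, List.count_cons_self] at h
        omega
      have hmem : h1 ∈ U' := List.count_pos_iff.mp (by omega)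
      obtain ⟨a, D, hD⟩ := first_h1 U' hmem
      exact ⟨0, a, D, by simp [hx, hD, List.append_assoc]⟩
    · have hx2 := fin2_eq_h2 x hx
      have hc : 2 ≤ U'.count h1 := by
        rwa [List.count_cons_of_ne hx] at h
      obtain ⟨c, a, D, hD⟩ := ih hc
      exact ⟨c + 1, a, D, by rw [List.replicate_succ]; simp [hx2, hD, List.append_assoc]⟩

lemma one_h1 (U : List (Fin 2)) (h : U.count h1 = 1) :
    ∃ a d, U = List.replicate a h2 ++ [h1] ++ List.replicate d h2 := by
  have hmem : h1 ∈ U := List.count_pos_iff.mp (by omega)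
  obtain ⟨a, D, hD⟩ := first_h1 U hmem
  have hDc : D.count h1 = 0 := by
    rw [hD] at h
    simp [List.count_append] at h
    omega
  exact ⟨a, D.length, by rw [hD]; congr 1; exact all_h2 D hDc⟩

lemma run_bound {M i c : ℕ} (h : List.replicate c h2 <:+: Vword M i) :
    c ≤ M * i + M := by
  have := h2run_le (M * i + M) ((List.range M).map (fun j => M * i + 1 + j))
    (by
      intro a ha
      simp at ha
      obtain ⟨t, ht, rfl⟩ := ha
      omega)
    (List.replicate c h2)
    (by rw [← Vword_eq]; exact h)
    (fun x hx => List.eq_of_mem_replicate hx)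
  simpa using this

lemma Vword_len_lb (M i : ℕ) : 1 + M * (M * i + 2) ≤ (Vword M i).length := by
  rw [Vword, List.length_append, List.length_flatMap]
  have h1' : (List.map (List.length ∘ fun j => List.replicate (M * i + 1 + j) h2 ++ [h1])
      (List.range M)).sum = (List.map (fun j => M * i + 1 + j + 1) (List.range M)).sum := by
    congr 1
    apply List.map_congr_left
    intro t _
    simp [Function.comp]
  simp only [Function.comp_def] at h1'
  rw [h1']
  have h2' : (List.map (fun _ : ℕ => M * i + 2) (List.range M)).sum
      ≤ (List.map (fun j => M * i + 1 + j + 1) (List.range M)).sum := by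
    apply List.sum_le_sum
    intro t _
    omega
  have h3' : (List.map (fun _ : ℕ => M * i + 2) (List.range M)).sum = M * (M * i + 2) := by
    rw [show (fun _ : ℕ => M * i + 2) = Function.const ℕ (M * i + 2) from rfl,
      List.map_const, List.sum_replicate, List.length_range, smul_eq_mul]
  simp only [List.length_cons, List.length_nil]
  omega

lemma len_ineq {M i : ℕ} (hM : 48 ≤ M) (hi : 1 ≤ i) {U : List (Fin 2)}
    (hU : U.length ≤ 2 * (M * i + M) + 1) :
    (U.length : ℚ) < 4 / (M : ℚ) * ((Vword M i).length : ℚ) := by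
  have hlb := Vword_len_lb M i
  have hx : (48 : ℚ) ≤ (M : ℚ) := by exact_mod_cast hM
  have hy : (1 : ℚ) ≤ (i : ℚ) := by exact_mod_cast hi
  have hUq : (U.length : ℚ) ≤ 2 * ((M : ℚ) * i + M) + 1 := by exact_mod_cast hU
  have hlq : 1 + (M : ℚ) * ((M : ℚ) * i + 2) ≤ ((Vword M i).length : ℚ) := by
    exact_mod_cast hlb
  have hx0 : (0 : ℚ) < (M : ℚ) := by linarith
  have h4 : (0 : ℚ) < 4 / (M : ℚ) := by positivity
  have step : 4 / (M : ℚ) * (1 + (M : ℚ) * ((M : ℚ) * i + 2))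
      ≤ 4 / (M : ℚ) * ((Vword M i).length : ℚ) :=
    mul_le_mul_of_nonneg_left hlq (le_of_lt h4)
  have expand : 4 / (M : ℚ) * (1 + (M : ℚ) * ((M : ℚ) * i + 2))
      = 4 / (M : ℚ) + 4 * ((M : ℚ) * i) + 8 := by
    field_simp
    ring
  have hMi : (M : ℚ) * 1 ≤ (M : ℚ) * i := by
    exact mul_le_mul_of_nonneg_left hy (le_of_lt hx0)
  rw [expand] at step
  linarith

end SC

open SC in
/-- small cancellation, Lemma 2. -/
theorem stmt_3 (n : ℕ) (hn : 2 ≤ n) (M : ℕ) (hM : M = 24 * n)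
    (i j : ℕ) (hi : 1 ≤ i) (hj : 1 ≤ j)
    (U A B A' B' : List (Fin 2))
    (hVi : Vword M i = A ++ U ++ B) (hVj : Vword M j = A' ++ U ++ B') :
    ((U.length : ℚ) <
      4 / (M : ℚ) * min ((Vword M i).length : ℚ) ((Vword M j).length : ℚ)) ∨
    (i = j ∧ A = A') := by
  have hM48 : 48 ≤ M := by omega
  by_cases hcnt : 2 ≤ U.count h1
  · right
    obtain ⟨c, a, D, hU⟩ := two_h1 U hcnt
    have hdi : Vword M i = (A ++ List.replicate c h2) ++ [h1]
        ++ List.replicate a h2 ++ [h1] ++ (D ++ B) := by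
      rw [hVi, hU]; simp [List.append_assoc]
    have hdj : Vword M j = (A' ++ List.replicate c h2) ++ [h1]
        ++ List.replicate a h2 ++ [h1] ++ (D ++ B') := by
      rw [hVj, hU]; simp [List.append_assoc]
    obtain ⟨k, hkM, hak, hPk⟩ := Vword_gap hdi
    obtain ⟨k', hk'M, hak', hPk'⟩ := Vword_gap hdj
    obtain ⟨hij, hkk⟩ := div_mod_unique (i := i) (j := j) hkM hk'M (by rw [← hak, ← hak'])
    subst hij
    subst hkk
    have heq : (A ++ List.replicate c h2) ++ [h1]
        = (A' ++ List.replicate c h2) ++ [h1] := by rw [hPk, hPk']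
    have heq2 : A ++ List.replicate c h2 = A' ++ List.replicate c h2 :=
      List.append_cancel_right heq
    exact ⟨rfl, List.append_cancel_right heq2⟩
  · left
    push_neg at hcnt
    have hUi : U <:+: Vword M i := ⟨A, B, hVi.symm⟩
    have hUj : U <:+: Vword M j := ⟨A', B', hVj.symm⟩
    have hbound : ∀ i' : ℕ, U <:+: Vword M i' → U.length ≤ 2 * (M * i' + M) + 1 := by
      intro i' hUV
      interval_cases hc : U.count h1
      · have hrep := all_h2 U hc
        have := run_bound (M := M) (i := i') (c := U.length) (by rw [← hrep]; exact hUV)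
        omega
      · obtain ⟨a, d, hU⟩ := one_h1 U hc
        have hpre : List.replicate a h2 <+: U := ⟨[h1] ++ List.replicate d h2, by
          rw [hU]; simp [List.append_assoc]⟩
        have hsuf : List.replicate d h2 <:+ U := ⟨List.replicate a h2 ++ [h1], by
          rw [hU]⟩
        have ha := run_bound (M := M) (i := i') (hpre.isInfix.trans hUV)
        have hd := run_bound (M := M) (i := i') (hsuf.isInfix.trans hUV)
        have hlen : U.length = a + 1 + d := by rw [hU]; simp; omega
        omega
    rcases le_total ((Vword M i).length : ℚ) ((Vword M j).length : ℚ) with hle | hle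
    · rw [min_eq_left hle]
      exact len_ineq hM48 hi (hbound i hUi)
    · rw [min_eq_right hle]
      exact len_ineq hM48 hj (hbound j hUj)
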